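/- (Strict minimality of the bound-state energy at zero quasi-momentum, attractive case.) Let d ∈ {1,2}, μ < 0 and k ∈ T^d with k ≠ 0. Suppose z₀ < E_min(0) satisfies Δ_μ(0;z₀) = 0 and z_k < E_min(k) satisfies Δ_μ(k;z_k) = 0. Then z₀ < z_k. -/
import Mathlib


open MeasureTheory Real Filter

noncomputable section

instance fact_two_pi_pos : Fact (0 < 2 * Real.pi) := ⟨by positivity⟩

/-- The `d`-dimensional torus `(ℝ/2πℤ)^d`. -/
abbrev Torus (d : ℕ) : Type := Fin d → AddCircle (2 * Real.pi)

/-- Cosine as a function on the circle `ℝ/2πℤ`. -/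
noncomputable def torusCos : AddCircle (2 * Real.pi) → ℝ := Real.cos_periodic.lift

/-- The one-particle dispersion `ε(p) = 2∑ᵢ (1 − cos pⁱ)` on the torus. -/
noncomputable def eps (d : ℕ) (p : Torus d) : ℝ := 2 * ∑ i, (1 - torusCos (p i))

/-- The normalized Haar measure `η` on the torus `T^d`. -/
noncomputable def η (d : ℕ) : Measure (Torus d) :=
  Measure.pi fun _ => (AddCircle.haarAddCircle : Measure (AddCircle (2 * Real.pi)))

instance (d : ℕ) : IsProbabilityMeasure (η d) := by unfold η; infer_instance

/-- The two-particle fiber dispersion `𝓔ₖ(p) = ε(k−p) + ε(p)`. -/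
noncomputable def calE (d : ℕ) (k p : Torus d) : ℝ := eps d (k - p) + eps d p

/-- `E_min(k) = min_{p ∈ T^d} 𝓔ₖ(p)`. -/
noncomputable def Emin (d : ℕ) (k : Torus d) : ℝ := sInf (Set.range (calE d k))

/-- `E_max(k) = max_{p ∈ T^d} 𝓔ₖ(p)`. -/
noncomputable def Emax (d : ℕ) (k : Torus d) : ℝ := sSup (Set.range (calE d k))

/-- The three-particle dispersion `E(K;p,q) = ε(K−p−q) + ε(p) + ε(q)`. -/
noncomputable def EE (d : ℕ) (K p q : Torus d) : ℝ := eps d (K - p - q) + eps d p + eps d q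

/-- `E_min(K) = min_{p,q ∈ T^d} E(K;p,q)`. -/
noncomputable def E3min (d : ℕ) (K : Torus d) : ℝ :=
  sInf (Set.range fun pq : Torus d × Torus d => EE d K pq.1 pq.2)

/-- `E_max(K) = max_{p,q ∈ T^d} E(K;p,q)`. -/
noncomputable def E3max (d : ℕ) (K : Torus d) : ℝ :=
  sSup (Set.range fun pq : Torus d × Torus d => EE d K pq.1 pq.2)

/-- The two-particle determinant `Δ_μ(k;z) = 1 + μ ∫ (𝓔ₖ(q) − z)⁻¹ dη(q)`. -/
noncomputable def Delta2 (d : ℕ) (μ : ℝ) (k : Torus d) (z : ℝ) : ℝ :=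
  1 + μ * ∫ q, (calE d k q - z)⁻¹ ∂(η d)

/-- The channel determinant `Δ_μ(K,p;z) = 1 + μ ∫ (E(K;p,q) − z)⁻¹ dη(q)`. -/
noncomputable def Delta3 (d : ℕ) (μ : ℝ) (K p : Torus d) (z : ℝ) : ℝ :=
  1 + μ * ∫ q, (EE d K p q - z)⁻¹ ∂(η d)

/-- The point `π ∈ ℝ/2πℤ`. -/
noncomputable def piPt : AddCircle (2 * Real.pi) := ((Real.pi : ℝ) : AddCircle (2 * Real.pi))

lemma torusCos_coe (x : ℝ) : torusCos (x : AddCircle (2 * Real.pi)) = Real.cos x :=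
  Function.Periodic.lift_coe _ _

lemma torusCos_continuous : Continuous torusCos :=
  Real.continuous_cos.quotient_liftOn' _

/-- coercion vector -/
noncomputable def cv (d : ℕ) (y : Fin d → ℝ) : Torus d := fun i => (y i : AddCircle (2 * Real.pi))

lemma cv_zero (d : ℕ) : cv d 0 = 0 := by
  funext i
  simp [cv]

lemma cv_add (d : ℕ) (y y' : Fin d → ℝ) : cv d y + cv d y' = cv d (y + y') := by
  funext i
  simp [cv, AddCircle.coe_add]

lemma torusCos_le_one (p : AddCircle (2 * Real.pi)) : torusCos p ≤ 1 := by
  obtain ⟨x, rfl⟩ := QuotientAddGroup.mk_surjective p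
  rw [show (QuotientAddGroup.mk x : AddCircle (2*Real.pi)) = (x : AddCircle (2*Real.pi)) from rfl, torusCos_coe]
  exact Real.cos_le_one x

lemma eps_nonneg (d : ℕ) (p : Torus d) : 0 ≤ eps d p := by
  unfold eps
  have h : ∀ i ∈ Finset.univ, (0:ℝ) ≤ 1 - torusCos (p i) := fun i _ => by
    linarith [torusCos_le_one (p i)]
  have := Finset.sum_nonneg h
  linarith

lemma calE_nonneg (d : ℕ) (k p : Torus d) : 0 ≤ calE d k p :=
  add_nonneg (eps_nonneg _ _) (eps_nonneg _ _)

lemma eps_continuous (d : ℕ) : Continuous (eps d) := by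
  unfold eps
  exact continuous_const.mul (continuous_finset_sum _ fun i _ =>
    continuous_const.sub (torusCos_continuous.comp (continuous_apply i)))

lemma calE_continuous (d : ℕ) (k : Torus d) : Continuous (calE d k) := by
  unfold calE
  exact ((eps_continuous d).comp (continuous_const.sub continuous_id)).add (eps_continuous d)

lemma integrand_continuous (d : ℕ) (k : Torus d) {z : ℝ} (hz : z < 0) :
    Continuous fun q => (calE d k q - z)⁻¹ := by
  refine Continuous.inv₀ ((calE_continuous d k).sub continuous_const) (fun q => ?_)
  have := calE_nonneg d k q
  intro h
  linarith [sub_eq_zero.mp h ▸ hz]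

lemma cont_integrable {d : ℕ} {g : Torus d → ℝ} (hg : Continuous g) : Integrable g (η d) :=
  hg.integrable_of_hasCompactSupport (HasCompactSupport.of_compactSpace _)

lemma calE_cv (d : ℕ) (κ y : Fin d → ℝ) :
    calE d (cv d κ) (cv d y) = 2 * ∑ i, (2 - Real.cos (κ i - y i) - Real.cos (y i)) := by
  unfold calE eps
  have hsub : ∀ i, (cv d κ - cv d y) i = ((κ i - y i : ℝ) : AddCircle (2*Real.pi)) := by
    intro i
    simp [cv, AddCircle.coe_sub]
  simp only [hsub, cv, torusCos_coe]
  rw [Finset.mul_sum, Finset.mul_sum, Finset.mul_sum, ← Finset.sum_add_distrib]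
  exact Finset.sum_congr rfl fun i _ => by ring
instance (d : ℕ) : (η d).IsAddLeftInvariant := by unfold η; infer_instance
instance (d : ℕ) : (η d).IsOpenPosMeasure := by unfold η; infer_instance

lemma avg2 {d : ℕ} {f : Torus d → ℝ} (hf : Continuous f) (a b : Torus d) :
    ∫ q, (f (a + q) + f (b + q)) ∂(η d) = 2 * ∫ q, f q ∂(η d) := by
  have ia : Integrable (fun q => f (a + q)) (η d) :=
    cont_integrable (hf.comp (continuous_const.add continuous_id))
  have ib : Integrable (fun q => f (b + q)) (η d) :=
    cont_integrable (hf.comp (continuous_const.add continuous_id))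
  rw [integral_add ia ib, integral_add_left_eq_self f a, integral_add_left_eq_self f b]
  ring

lemma avg4 {d : ℕ} {f : Torus d → ℝ} (hf : Continuous f) (a b c e : Torus d) :
    ∫ q, (f (a + q) + f (b + q) + f (c + q) + f (e + q)) ∂(η d) = 4 * ∫ q, f q ∂(η d) := by
  have I : ∀ t : Torus d, Integrable (fun q => f (t + q)) (η d) := fun t =>
    cont_integrable (hf.comp (continuous_const.add continuous_id))
  have iab : Integrable (fun q => f (a + q) + f (b + q)) (η d) := (I a).add (I b)
  have ice : Integrable (fun q => f (c + q) + f (e + q)) (η d) := (I c).add (I e)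
  have e0 : (∫ q, (f (a + q) + f (b + q) + f (c + q) + f (e + q)) ∂(η d))
      = ∫ q, ((f (a + q) + f (b + q)) + (f (c + q) + f (e + q))) ∂(η d) := by
    congr 1
    funext q
    ring
  rw [e0, integral_add iab ice, avg2 hf a b, avg2 hf c e]
  ring

lemma integral_lt_integral {d : ℕ} {g₁ g₂ : Torus d → ℝ} (h₁ : Continuous g₁)
    (h₂ : Continuous g₂) (hle : ∀ q, g₁ q ≤ g₂ q) (q₀ : Torus d) (hlt : g₁ q₀ < g₂ q₀) :
    ∫ q, g₁ q ∂(η d) < ∫ q, g₂ q ∂(η d) := by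
  have i₁ : Integrable g₁ (η d) := cont_integrable h₁
  have i₂ : Integrable g₂ (η d) := cont_integrable h₂
  have key : 0 < ∫ q, (g₂ q - g₁ q) ∂(η d) := by
    rw [integral_pos_iff_support_of_nonneg (fun q => sub_nonneg.2 (hle q)) (i₂.sub i₁)]
    have hU : IsOpen {q : Torus d | 0 < g₂ q - g₁ q} :=
      isOpen_lt continuous_const (h₂.sub h₁)
    refine lt_of_lt_of_le (hU.measure_pos (η d) ⟨q₀, by simpa using sub_pos.2 hlt⟩)
      (measure_mono fun q hq => ?_)
    exact ne_of_gt hq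
  rw [integral_sub i₂ i₁] at key
  linarith

lemma pair_le {B u v : ℝ} (h1 : |u| ≤ |v|) (h2 : |v| < B) :
    (B - u)⁻¹ + (B + u)⁻¹ ≤ (B - v)⁻¹ + (B + v)⁻¹ := by
  have hu : |u| < B := lt_of_le_of_lt h1 h2
  obtain ⟨hu1, hu2⟩ := abs_lt.1 hu
  obtain ⟨hv1, hv2⟩ := abs_lt.1 h2
  have hB : 0 < B := lt_of_le_of_lt (abs_nonneg v) h2
  have n1 : B - u ≠ 0 := by linarith
  have n2 : B + u ≠ 0 := by linarith
  have n3 : B - v ≠ 0 := by linarith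
  have n4 : B + v ≠ 0 := by linarith
  have e1 : (B - u)⁻¹ + (B + u)⁻¹ = 2 * B / ((B - u) * (B + u)) := by
    field_simp
    ring
  have e2 : (B - v)⁻¹ + (B + v)⁻¹ = 2 * B / ((B - v) * (B + v)) := by
    field_simp
    ring
  rw [e1, e2]
  have hsq : u ^ 2 ≤ v ^ 2 := by
    nlinarith [sq_abs u, sq_abs v, mul_self_le_mul_self (abs_nonneg u) h1]
  exact div_le_div_of_nonneg_left (by linarith) (by nlinarith) (by nlinarith)

lemma pair_lt {B u v : ℝ} (h1 : |u| < |v|) (h2 : |v| < B) :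
    (B - u)⁻¹ + (B + u)⁻¹ < (B - v)⁻¹ + (B + v)⁻¹ := by
  have hu : |u| < B := lt_trans h1 h2
  obtain ⟨hu1, hu2⟩ := abs_lt.1 hu
  obtain ⟨hv1, hv2⟩ := abs_lt.1 h2
  have hB : 0 < B := lt_of_le_of_lt (abs_nonneg v) h2
  have n1 : B - u ≠ 0 := by linarith
  have n2 : B + u ≠ 0 := by linarith
  have n3 : B - v ≠ 0 := by linarith
  have n4 : B + v ≠ 0 := by linarith
  have e1 : (B - u)⁻¹ + (B + u)⁻¹ = 2 * B / ((B - u) * (B + u)) := by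
    field_simp
    ring
  have e2 : (B - v)⁻¹ + (B + v)⁻¹ = 2 * B / ((B - v) * (B + v)) := by
    field_simp
    ring
  rw [e1, e2]
  have hsq : u ^ 2 < v ^ 2 := by
    nlinarith [sq_abs u, sq_abs v, mul_self_lt_mul_self (abs_nonneg u) h1]
  exact div_lt_div_of_pos_left (by linarith) (by nlinarith) (by nlinarith)
lemma coe_equivIco (u : AddCircle (2*Real.pi)) :
    ((AddCircle.equivIco (2*Real.pi) 0 u : ℝ) : AddCircle (2*Real.pi)) = u := by
  have h := (AddCircle.equivIco (2*Real.pi) 0).symm_apply_apply u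
  rwa [AddCircle.equivIco, QuotientAddGroup.equivIcoMod_symm_apply] at h

lemma abs_cos_half_lt_one {κ : ℝ} (h0 : 0 < κ) (h2 : κ < 2*Real.pi) :
    |Real.cos (κ/2)| < 1 := by
  have hπ := Real.pi_pos
  have l1 : Real.cos (κ/2) < Real.cos 0 :=
    Real.strictAntiOn_cos ⟨le_refl 0, hπ.le⟩ ⟨by linarith, by linarith⟩ (by linarith)
  have l2 : Real.cos Real.pi < Real.cos (κ/2) :=
    Real.strictAntiOn_cos ⟨by linarith, by linarith⟩ ⟨hπ.le, le_refl _⟩ (by linarith)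
  rw [Real.cos_zero] at l1
  rw [Real.cos_pi] at l2
  rw [abs_lt]
  exact ⟨by linarith, l1⟩

lemma key1 (k : Torus 1) (hk : k ≠ 0) {z : ℝ} (hz : z < 0) :
    ∫ q, (calE 1 k q - z)⁻¹ ∂(η 1) < ∫ q, (calE 1 0 q - z)⁻¹ ∂(η 1) := by
  have hk0 : k 0 ≠ 0 := by
    intro h
    exact hk (funext fun i => by rw [Subsingleton.elim i 0, h]; rfl)
  set κ : ℝ := (AddCircle.equivIco (2*Real.pi) 0 (k 0) : ℝ) with hκdef
  have hκcoe : ((κ : ℝ) : AddCircle (2*Real.pi)) = k 0 := coe_equivIco (k 0)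
  have hκmem := (AddCircle.equivIco (2*Real.pi) 0 (k 0)).2
  have hκ0 : 0 ≤ κ := hκmem.1
  have hκ2 : κ < 2*Real.pi := by have := hκmem.2; linarith [this]
  have hκne : κ ≠ 0 := by
    intro h
    apply hk0
    rw [← hκcoe, h]
    norm_cast
  have hκpos : 0 < κ := lt_of_le_of_ne hκ0 (Ne.symm hκne)
  have hc : |Real.cos (κ/2)| < 1 := abs_cos_half_lt_one hκpos hκ2
  have hkcv : k = cv 1 (fun _ => κ) := funext fun i => by
    rw [Subsingleton.elim i 0]; exact hκcoe.symm
  set c := Real.cos (κ/2) with hcdef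
  set f : Torus 1 → ℝ := fun q => (calE 1 k q - z)⁻¹ with hfdef
  set f0 : Torus 1 → ℝ := fun q => (calE 1 0 q - z)⁻¹ with hf0def
  have hfc : Continuous f := integrand_continuous 1 k hz
  have hf0c : Continuous f0 := integrand_continuous 1 0 hz
  set a : Torus 1 := cv 1 (fun _ => κ/2) with hadef
  set b : Torus 1 := cv 1 (fun _ => κ/2 + Real.pi) with hbdef
  set pB : Torus 1 := cv 1 (fun _ => Real.pi) with hpBdef
  -- the algebraic form of the symmetrized integrands
  have hform : ∀ x : ℝ,
      (f (a + cv 1 (fun _ => x)) + f (b + cv 1 (fun _ => x))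
        = ((4 - z) - 4*(c * Real.cos x))⁻¹ + ((4 - z) + 4*(c * Real.cos x))⁻¹)
      ∧ (f0 ((0 : Torus 1) + cv 1 (fun _ => x)) + f0 (pB + cv 1 (fun _ => x))
        = ((4 - z) - 4*(Real.cos x))⁻¹ + ((4 - z) + 4*(Real.cos x))⁻¹) := by
    intro x
    have ha' : a + cv 1 (fun _ => x) = cv 1 (fun _ => κ/2 + x) := cv_add 1 _ _
    have hb' : b + cv 1 (fun _ => x) = cv 1 (fun _ => κ/2 + Real.pi + x) := cv_add 1 _ _
    have h0' : (0 : Torus 1) + cv 1 (fun _ => x) = cv 1 (fun _ => 0 + x) := by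
      rw [← cv_zero 1]; exact cv_add 1 _ _
    have hpB' : pB + cv 1 (fun _ => x) = cv 1 (fun _ => Real.pi + x) := cv_add 1 _ _
    have c1 : calE 1 k (a + cv 1 (fun _ => x))
        = 2*(2 - Real.cos (κ - (κ/2 + x)) - Real.cos (κ/2 + x)) := by
      rw [ha', hkcv, calE_cv, Fin.sum_univ_one]
    have c2 : calE 1 k (b + cv 1 (fun _ => x))
        = 2*(2 - Real.cos (κ - (κ/2 + Real.pi + x)) - Real.cos (κ/2 + Real.pi + x)) := by
      rw [hb', hkcv, calE_cv, Fin.sum_univ_one]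
    have c3 : calE 1 0 ((0 : Torus 1) + cv 1 (fun _ => x))
        = 2*(2 - Real.cos (0 - (0 + x)) - Real.cos (0 + x)) := by
      rw [h0', show (0 : Torus 1) = cv 1 (fun _ => 0) from (cv_zero 1).symm, calE_cv,
        Fin.sum_univ_one]
    have c4 : calE 1 0 (pB + cv 1 (fun _ => x))
        = 2*(2 - Real.cos (0 - (Real.pi + x)) - Real.cos (Real.pi + x)) := by
      rw [hpB', show (0 : Torus 1) = cv 1 (fun _ => 0) from (cv_zero 1).symm, calE_cv,
        Fin.sum_univ_one]
    have E1 : 2*(2 - Real.cos (κ - (κ/2 + x)) - Real.cos (κ/2 + x)) - z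
        = (4 - z) - 4*(c * Real.cos x) := by
      rw [show κ - (κ/2 + x) = κ/2 - x by ring, Real.cos_sub, Real.cos_add, hcdef]; ring
    have E2 : 2*(2 - Real.cos (κ - (κ/2 + Real.pi + x)) - Real.cos (κ/2 + Real.pi + x)) - z
        = (4 - z) + 4*(c * Real.cos x) := by
      rw [show κ - (κ/2 + Real.pi + x) = (κ/2 - x) - Real.pi by ring,
        show κ/2 + Real.pi + x = (κ/2 + x) + Real.pi by ring, Real.cos_sub_pi,
        Real.cos_add_pi, Real.cos_sub, Real.cos_add, hcdef]; ring
    have E3 : 2*(2 - Real.cos (0 - (0 + x)) - Real.cos (0 + x)) - z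
        = (4 - z) - 4*(Real.cos x) := by
      rw [show (0:ℝ) - (0 + x) = -x by ring, Real.cos_neg, zero_add]; ring
    have E4 : 2*(2 - Real.cos (0 - (Real.pi + x)) - Real.cos (Real.pi + x)) - z
        = (4 - z) + 4*(Real.cos x) := by
      rw [show (0:ℝ) - (Real.pi + x) = -(x + Real.pi) by ring, Real.cos_neg,
        show Real.pi + x = x + Real.pi by ring, Real.cos_add_pi]; ring
    constructor
    · rw [hfdef]; simp only []; rw [c1, c2, E1, E2]
    · rw [hf0def]; simp only []; rw [c3, c4, E3, E4]
  have habs1 : ∀ x : ℝ, |4*(c * Real.cos x)| ≤ |4*(Real.cos x)| := by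
    intro x
    rw [abs_mul, abs_mul, abs_mul]
    have h1 : |c| ≤ 1 := hc.le
    have h2 : |c| * |Real.cos x| ≤ |Real.cos x| := mul_le_of_le_one_left (abs_nonneg _) h1
    exact mul_le_mul_of_nonneg_left h2 (abs_nonneg 4)
  have habs2 : ∀ x : ℝ, |4*(Real.cos x)| < 4 - z := by
    intro x
    rw [abs_mul, abs_of_nonneg (by norm_num : (0:ℝ) ≤ 4)]
    nlinarith [Real.abs_cos_le_one x]
  have hle : ∀ q : Torus 1, f (a + q) + f (b + q) ≤ f0 ((0:Torus 1) + q) + f0 (pB + q) := by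
    intro q
    obtain ⟨x, hx⟩ := QuotientAddGroup.mk_surjective (q 0)
    have hq : q = cv 1 (fun _ => x) := funext fun i => by
      rw [Subsingleton.elim i 0, ← hx]; rfl
    rw [hq, (hform x).1, (hform x).2]
    exact pair_le (habs1 x) (habs2 x)
  have hlt : f (a + 0) + f (b + 0) < f0 ((0:Torus 1) + 0) + f0 (pB + 0) := by
    have h00 : (0 : Torus 1) = cv 1 (fun _ => (0:ℝ)) := (cv_zero 1).symm
    rw [show (f (a + 0) + f (b + 0) = f (a + cv 1 (fun _ => (0:ℝ))) + f (b + cv 1 (fun _ => (0:ℝ)))) from by rw [← h00],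
      show (f0 ((0:Torus 1) + 0) + f0 (pB + 0) = f0 ((0:Torus 1) + cv 1 (fun _ => (0:ℝ))) + f0 (pB + cv 1 (fun _ => (0:ℝ)))) from by rw [← h00],
      (hform 0).1, (hform 0).2, Real.cos_zero]
    have h42 : |4*(1:ℝ)| < 4 - z := by
      rw [mul_one, abs_of_nonneg (by norm_num : (0:ℝ) ≤ 4)]
      linarith
    apply pair_lt _ h42
    rw [abs_mul, abs_mul]
    simp only [abs_one, mul_one]
    have h4 : (0:ℝ) < |4| := by norm_num
    exact mul_lt_of_lt_one_right h4 hc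
  have cshift : ∀ (g : Torus 1 → ℝ), Continuous g → ∀ t : Torus 1,
      Continuous fun q : Torus 1 => g (t + q) := fun g hg t =>
    hg.comp (continuous_const.add continuous_id)
  have cg1 : Continuous fun q : Torus 1 => f (a + q) + f (b + q) :=
    (cshift f hfc a).add (cshift f hfc b)
  have cg2 : Continuous fun q : Torus 1 => f0 ((0:Torus 1) + q) + f0 (pB + q) :=
    (cshift f0 hf0c 0).add (cshift f0 hf0c pB)
  have hcmp := integral_lt_integral cg1 cg2 hle 0 hlt
  have hA := avg2 hfc a b
  have hB := avg2 hf0c 0 pB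
  rw [hA, hB] at hcmp
  show (∫ q, f q ∂(η 1)) < ∫ q, f0 q ∂(η 1)
  linarith
lemma quad_le {B u₁ u₂ v₁ v₂ : ℝ} (h1 : |u₁| ≤ |v₁|) (h2 : |u₂| ≤ |v₂|)
    (hB : |v₁| + |v₂| < B) :
    (B - u₂ - u₁)⁻¹ + (B - u₂ + u₁)⁻¹ + (B + u₂ - u₁)⁻¹ + (B + u₂ + u₁)⁻¹
      ≤ (B - v₂ - v₁)⁻¹ + (B - v₂ + v₁)⁻¹ + (B + v₂ - v₁)⁻¹ + (B + v₂ + v₁)⁻¹ := by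
  have l1 := le_abs_self u₂
  have l2 := neg_abs_le u₂
  have l3 := le_abs_self v₁
  have l4 := neg_abs_le v₁
  have l5 := abs_nonneg v₂
  have l6 := abs_nonneg v₁
  have p1 : (B - u₂ - u₁)⁻¹ + (B - u₂ + u₁)⁻¹ ≤ (B - u₂ - v₁)⁻¹ + (B - u₂ + v₁)⁻¹ :=
    pair_le h1 (by linarith)
  have p2 : (B + u₂ - u₁)⁻¹ + (B + u₂ + u₁)⁻¹ ≤ (B + u₂ - v₁)⁻¹ + (B + u₂ + v₁)⁻¹ :=
    pair_le h1 (by linarith)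
  have p3 : (B - v₁ - u₂)⁻¹ + (B - v₁ + u₂)⁻¹ ≤ (B - v₁ - v₂)⁻¹ + (B - v₁ + v₂)⁻¹ :=
    pair_le h2 (by linarith)
  have p4 : (B + v₁ - u₂)⁻¹ + (B + v₁ + u₂)⁻¹ ≤ (B + v₁ - v₂)⁻¹ + (B + v₁ + v₂)⁻¹ :=
    pair_le h2 (by linarith)
  rw [show B - u₂ - v₁ = B - v₁ - u₂ by ring, show B - u₂ + v₁ = B + v₁ - u₂ by ring] at p1
  rw [show B + u₂ - v₁ = B - v₁ + u₂ by ring, show B + u₂ + v₁ = B + v₁ + u₂ by ring] at p2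
  rw [show B - v₁ - v₂ = B - v₂ - v₁ by ring, show B - v₁ + v₂ = B + v₂ - v₁ by ring] at p3
  rw [show B + v₁ - v₂ = B - v₂ + v₁ by ring, show B + v₁ + v₂ = B + v₂ + v₁ by ring] at p4
  linarith

lemma quad_lt₁ {B u₁ u₂ v₁ v₂ : ℝ} (h1 : |u₁| < |v₁|) (h2 : |u₂| ≤ |v₂|)
    (hB : |v₁| + |v₂| < B) :
    (B - u₂ - u₁)⁻¹ + (B - u₂ + u₁)⁻¹ + (B + u₂ - u₁)⁻¹ + (B + u₂ + u₁)⁻¹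
      < (B - v₂ - v₁)⁻¹ + (B - v₂ + v₁)⁻¹ + (B + v₂ - v₁)⁻¹ + (B + v₂ + v₁)⁻¹ := by
  have l1 := le_abs_self u₂
  have l2 := neg_abs_le u₂
  have l3 := le_abs_self v₁
  have l4 := neg_abs_le v₁
  have l5 := abs_nonneg v₂
  have l6 := abs_nonneg v₁
  have p1 : (B - u₂ - u₁)⁻¹ + (B - u₂ + u₁)⁻¹ < (B - u₂ - v₁)⁻¹ + (B - u₂ + v₁)⁻¹ :=
    pair_lt h1 (by linarith)
  have p2 : (B + u₂ - u₁)⁻¹ + (B + u₂ + u₁)⁻¹ < (B + u₂ - v₁)⁻¹ + (B + u₂ + v₁)⁻¹ :=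
    pair_lt h1 (by linarith)
  have p3 : (B - v₁ - u₂)⁻¹ + (B - v₁ + u₂)⁻¹ ≤ (B - v₁ - v₂)⁻¹ + (B - v₁ + v₂)⁻¹ :=
    pair_le h2 (by linarith)
  have p4 : (B + v₁ - u₂)⁻¹ + (B + v₁ + u₂)⁻¹ ≤ (B + v₁ - v₂)⁻¹ + (B + v₁ + v₂)⁻¹ :=
    pair_le h2 (by linarith)
  rw [show B - u₂ - v₁ = B - v₁ - u₂ by ring, show B - u₂ + v₁ = B + v₁ - u₂ by ring] at p1
  rw [show B + u₂ - v₁ = B - v₁ + u₂ by ring, show B + u₂ + v₁ = B + v₁ + u₂ by ring] at p2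
  rw [show B - v₁ - v₂ = B - v₂ - v₁ by ring, show B - v₁ + v₂ = B + v₂ - v₁ by ring] at p3
  rw [show B + v₁ - v₂ = B - v₂ + v₁ by ring, show B + v₁ + v₂ = B + v₂ + v₁ by ring] at p4
  linarith

lemma quad_lt₂ {B u₁ u₂ v₁ v₂ : ℝ} (h1 : |u₁| ≤ |v₁|) (h2 : |u₂| < |v₂|)
    (hB : |v₁| + |v₂| < B) :
    (B - u₂ - u₁)⁻¹ + (B - u₂ + u₁)⁻¹ + (B + u₂ - u₁)⁻¹ + (B + u₂ + u₁)⁻¹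
      < (B - v₂ - v₁)⁻¹ + (B - v₂ + v₁)⁻¹ + (B + v₂ - v₁)⁻¹ + (B + v₂ + v₁)⁻¹ := by
  have l1 := le_abs_self u₂
  have l2 := neg_abs_le u₂
  have l3 := le_abs_self v₁
  have l4 := neg_abs_le v₁
  have l5 := abs_nonneg v₂
  have l6 := abs_nonneg v₁
  have p1 : (B - u₂ - u₁)⁻¹ + (B - u₂ + u₁)⁻¹ ≤ (B - u₂ - v₁)⁻¹ + (B - u₂ + v₁)⁻¹ :=
    pair_le h1 (by linarith)
  have p2 : (B + u₂ - u₁)⁻¹ + (B + u₂ + u₁)⁻¹ ≤ (B + u₂ - v₁)⁻¹ + (B + u₂ + v₁)⁻¹ :=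
    pair_le h1 (by linarith)
  have p3 : (B - v₁ - u₂)⁻¹ + (B - v₁ + u₂)⁻¹ < (B - v₁ - v₂)⁻¹ + (B - v₁ + v₂)⁻¹ :=
    pair_lt h2 (by linarith)
  have p4 : (B + v₁ - u₂)⁻¹ + (B + v₁ + u₂)⁻¹ < (B + v₁ - v₂)⁻¹ + (B + v₁ + v₂)⁻¹ :=
    pair_lt h2 (by linarith)
  rw [show B - u₂ - v₁ = B - v₁ - u₂ by ring, show B - u₂ + v₁ = B + v₁ - u₂ by ring] at p1
  rw [show B + u₂ - v₁ = B - v₁ + u₂ by ring, show B + u₂ + v₁ = B + v₁ + u₂ by ring] at p2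
  rw [show B - v₁ - v₂ = B - v₂ - v₁ by ring, show B - v₁ + v₂ = B + v₂ - v₁ by ring] at p3
  rw [show B + v₁ - v₂ = B - v₂ + v₁ by ring, show B + v₁ + v₂ = B + v₂ + v₁ by ring] at p4
  linarith

lemma cosE0 (κ x : ℝ) : 2 - Real.cos (κ - (κ/2 + x)) - Real.cos (κ/2 + x)
    = 2 - 2*(Real.cos (κ/2) * Real.cos x) := by
  rw [show κ - (κ/2 + x) = κ/2 - x by ring, Real.cos_sub, Real.cos_add]
  ring

lemma cosEpi (κ x : ℝ) : 2 - Real.cos (κ - (κ/2 + Real.pi + x)) - Real.cos (κ/2 + Real.pi + x)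
    = 2 + 2*(Real.cos (κ/2) * Real.cos x) := by
  rw [show κ - (κ/2 + Real.pi + x) = (κ/2 - x) - Real.pi by ring,
    show κ/2 + Real.pi + x = (κ/2 + x) + Real.pi by ring, Real.cos_sub_pi, Real.cos_add_pi,
    Real.cos_sub, Real.cos_add]
  ring
lemma form2 (κ : Fin 2 → ℝ) (z : ℝ) (x : Fin 2 → ℝ) :
    (calE 2 (cv 2 κ) (cv 2 (fun i => κ i / 2) + cv 2 x) - z)⁻¹
      + (calE 2 (cv 2 κ) (cv 2 ![κ 0 / 2 + Real.pi, κ 1 / 2] + cv 2 x) - z)⁻¹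
      + (calE 2 (cv 2 κ) (cv 2 ![κ 0 / 2, κ 1 / 2 + Real.pi] + cv 2 x) - z)⁻¹
      + (calE 2 (cv 2 κ) (cv 2 ![κ 0 / 2 + Real.pi, κ 1 / 2 + Real.pi] + cv 2 x) - z)⁻¹
    = ((8 - z) - 4*(Real.cos (κ 1 / 2) * Real.cos (x 1)) - 4*(Real.cos (κ 0 / 2) * Real.cos (x 0)))⁻¹
      + ((8 - z) - 4*(Real.cos (κ 1 / 2) * Real.cos (x 1)) + 4*(Real.cos (κ 0 / 2) * Real.cos (x 0)))⁻¹
      + ((8 - z) + 4*(Real.cos (κ 1 / 2) * Real.cos (x 1)) - 4*(Real.cos (κ 0 / 2) * Real.cos (x 0)))⁻¹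
      + ((8 - z) + 4*(Real.cos (κ 1 / 2) * Real.cos (x 1)) + 4*(Real.cos (κ 0 / 2) * Real.cos (x 0)))⁻¹ := by
  rw [cv_add, cv_add, cv_add, cv_add, calE_cv, calE_cv, calE_cv, calE_cv,
    Fin.sum_univ_two, Fin.sum_univ_two, Fin.sum_univ_two, Fin.sum_univ_two]
  simp only [Pi.add_apply, Matrix.cons_val_zero, Matrix.cons_val_one, Matrix.head_cons]
  rw [cosE0 (κ 0) (x 0), cosE0 (κ 1) (x 1), cosEpi (κ 0) (x 0), cosEpi (κ 1) (x 1)]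
  ring
lemma abs4_le {c y : ℝ} (hc : |c| ≤ 1) : |4*(c*y)| ≤ |4*(1*y)| := by
  rw [one_mul, abs_mul, abs_mul, abs_mul]
  exact mul_le_mul_of_nonneg_left
    (mul_le_of_le_one_left (abs_nonneg y) hc) (abs_nonneg 4)

lemma abs4_lt {c y : ℝ} (hc : |c| < 1) (hy : y ≠ 0) : |4*(c*y)| < |4*(1*y)| := by
  rw [one_mul, abs_mul, abs_mul, abs_mul]
  exact mul_lt_mul_of_pos_left (mul_lt_of_lt_one_left (abs_pos.2 hy) hc)
    (by norm_num : (0:ℝ) < |4|)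

lemma abs4_eq (y : ℝ) : |4*(1*y)| = 4*|y| := by
  rw [one_mul, abs_mul, abs_of_nonneg (by norm_num : (0:ℝ) ≤ 4)]

lemma key2 (k : Torus 2) (hk : k ≠ 0) {z : ℝ} (hz : z < 0) :
    ∫ q, (calE 2 k q - z)⁻¹ ∂(η 2) < ∫ q, (calE 2 0 q - z)⁻¹ ∂(η 2) := by
  obtain ⟨i0, hi0⟩ : ∃ i, k i ≠ 0 := by
    by_contra h
    push_neg at h
    exact hk (funext fun i => h i)
  set κ : Fin 2 → ℝ := fun i => (AddCircle.equivIco (2*Real.pi) 0 (k i) : ℝ) with hκdef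
  have hκcoe : ∀ i, ((κ i : ℝ) : AddCircle (2*Real.pi)) = k i := fun i => coe_equivIco (k i)
  have hκmem : ∀ i, 0 ≤ κ i ∧ κ i < 2*Real.pi := fun i => by
    have h := (AddCircle.equivIco (2*Real.pi) 0 (k i)).2
    exact ⟨h.1, by have := h.2; linarith⟩
  have hκstrict : 0 < κ i0 := by
    rcases eq_or_lt_of_le (hκmem i0).1 with h | h
    · exfalso
      apply hi0
      rw [← hκcoe i0, ← h]
      norm_cast
    · exact h
  have hcall : ∀ i, |Real.cos (κ i / 2)| ≤ 1 := fun i => Real.abs_cos_le_one _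
  have hcstrict : |Real.cos (κ i0 / 2)| < 1 := abs_cos_half_lt_one hκstrict (hκmem i0).2
  have hkcv : k = cv 2 κ := funext fun i => (hκcoe i).symm
  have h0cv : (0 : Torus 2) = cv 2 (fun _ => (0:ℝ)) := by
    rw [show (fun _ => (0:ℝ)) = (0 : Fin 2 → ℝ) from rfl, cv_zero]
  set f : Torus 2 → ℝ := fun q => (calE 2 k q - z)⁻¹ with hfdef
  set f0 : Torus 2 → ℝ := fun q => (calE 2 0 q - z)⁻¹ with hf0def
  have hfc : Continuous f := integrand_continuous 2 k hz
  have hf0c : Continuous f0 := integrand_continuous 2 0 hz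
  set A1 : Torus 2 := cv 2 (fun i => κ i / 2) with hA1
  set A2 : Torus 2 := cv 2 ![κ 0 / 2 + Real.pi, κ 1 / 2] with hA2
  set A3 : Torus 2 := cv 2 ![κ 0 / 2, κ 1 / 2 + Real.pi] with hA3
  set A4 : Torus 2 := cv 2 ![κ 0 / 2 + Real.pi, κ 1 / 2 + Real.pi] with hA4
  set C1 : Torus 2 := cv 2 (fun i => (fun _ => (0:ℝ)) i / 2) with hC1
  set C2 : Torus 2 := cv 2 ![(fun _ => (0:ℝ)) 0 / 2 + Real.pi, (fun _ => (0:ℝ)) 1 / 2] with hC2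
  set C3 : Torus 2 := cv 2 ![(fun _ => (0:ℝ)) 0 / 2, (fun _ => (0:ℝ)) 1 / 2 + Real.pi] with hC3
  set C4 : Torus 2 := cv 2 ![(fun _ => (0:ℝ)) 0 / 2 + Real.pi, (fun _ => (0:ℝ)) 1 / 2 + Real.pi]
    with hC4
  have hone : ∀ i : Fin 2, Real.cos ((fun _ => (0:ℝ)) i / 2) = 1 := fun i => by
    norm_num
  -- algebraic forms
  have hformk : ∀ x : Fin 2 → ℝ,
      f (A1 + cv 2 x) + f (A2 + cv 2 x) + f (A3 + cv 2 x) + f (A4 + cv 2 x)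
      = ((8 - z) - 4*(Real.cos (κ 1 / 2) * Real.cos (x 1)) - 4*(Real.cos (κ 0 / 2) * Real.cos (x 0)))⁻¹
      + ((8 - z) - 4*(Real.cos (κ 1 / 2) * Real.cos (x 1)) + 4*(Real.cos (κ 0 / 2) * Real.cos (x 0)))⁻¹
      + ((8 - z) + 4*(Real.cos (κ 1 / 2) * Real.cos (x 1)) - 4*(Real.cos (κ 0 / 2) * Real.cos (x 0)))⁻¹
      + ((8 - z) + 4*(Real.cos (κ 1 / 2) * Real.cos (x 1)) + 4*(Real.cos (κ 0 / 2) * Real.cos (x 0)))⁻¹ := by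
    intro x
    rw [hfdef]
    simp only []
    rw [hA1, hA2, hA3, hA4, hkcv]
    exact form2 κ z x
  have hform0 : ∀ x : Fin 2 → ℝ,
      f0 (C1 + cv 2 x) + f0 (C2 + cv 2 x) + f0 (C3 + cv 2 x) + f0 (C4 + cv 2 x)
      = ((8 - z) - 4*(1 * Real.cos (x 1)) - 4*(1 * Real.cos (x 0)))⁻¹
      + ((8 - z) - 4*(1 * Real.cos (x 1)) + 4*(1 * Real.cos (x 0)))⁻¹
      + ((8 - z) + 4*(1 * Real.cos (x 1)) - 4*(1 * Real.cos (x 0)))⁻¹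
      + ((8 - z) + 4*(1 * Real.cos (x 1)) + 4*(1 * Real.cos (x 0)))⁻¹ := by
    intro x
    rw [hf0def]
    simp only []
    rw [hC1, hC2, hC3, hC4, h0cv, form2 (fun _ => (0:ℝ)) z x]
    norm_num
  have hB8 : ∀ x : Fin 2 → ℝ, |4*(1 * Real.cos (x 0))| + |4*(1 * Real.cos (x 1))| < 8 - z := by
    intro x
    rw [abs4_eq, abs4_eq]
    nlinarith [Real.abs_cos_le_one (x 0), Real.abs_cos_le_one (x 1)]
  have hle : ∀ q : Torus 2,
      f (A1 + q) + f (A2 + q) + f (A3 + q) + f (A4 + q)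
        ≤ f0 (C1 + q) + f0 (C2 + q) + f0 (C3 + q) + f0 (C4 + q) := by
    intro q
    choose x hx using fun i => QuotientAddGroup.mk_surjective (q i)
    have hq : q = cv 2 x := funext fun i => (hx i).symm
    rw [hq, hformk x, hform0 x]
    exact quad_le (abs4_le (hcall 0)) (abs4_le (hcall 1)) (hB8 x)
  have hlt : f (A1 + 0) + f (A2 + 0) + f (A3 + 0) + f (A4 + 0)
      < f0 (C1 + 0) + f0 (C2 + 0) + f0 (C3 + 0) + f0 (C4 + 0) := by
    rw [h0cv, hformk (fun _ => (0:ℝ)), hform0 (fun _ => (0:ℝ))]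
    simp only [Real.cos_zero]
    have hone1 : (1:ℝ) ≠ 0 := one_ne_zero
    have hBB : |4*((1:ℝ)*1)| + |4*((1:ℝ)*1)| < 8 - z := by
      rw [abs4_eq]
      simp only [abs_one]
      linarith
    have hi02 : i0 = 0 ∨ i0 = 1 := by fin_cases i0 <;> [exact Or.inl rfl; exact Or.inr rfl]
    rcases hi02 with h | h
    · rw [h] at hcstrict
      exact quad_lt₁ (abs4_lt hcstrict hone1) (abs4_le (hcall 1)) hBB
    · rw [h] at hcstrict
      exact quad_lt₂ (abs4_le (hcall 0)) (abs4_lt hcstrict hone1) hBB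
  have cshift : ∀ (g : Torus 2 → ℝ), Continuous g → ∀ t : Torus 2,
      Continuous fun q : Torus 2 => g (t + q) := fun g hg t =>
    hg.comp (continuous_const.add continuous_id)
  have cg1 : Continuous fun q : Torus 2 =>
      f (A1 + q) + f (A2 + q) + f (A3 + q) + f (A4 + q) :=
    (((cshift f hfc A1).add (cshift f hfc A2)).add (cshift f hfc A3)).add (cshift f hfc A4)
  have cg2 : Continuous fun q : Torus 2 =>
      f0 (C1 + q) + f0 (C2 + q) + f0 (C3 + q) + f0 (C4 + q) :=
    (((cshift f0 hf0c C1).add (cshift f0 hf0c C2)).add (cshift f0 hf0c C3)).add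
      (cshift f0 hf0c C4)
  have hcmp := integral_lt_integral cg1 cg2 hle 0 hlt
  have hA := avg4 hfc A1 A2 A3 A4
  have hB := avg4 hf0c C1 C2 C3 C4
  rw [hA, hB] at hcmp
  show (∫ q, f q ∂(η 2)) < ∫ q, f0 q ∂(η 2)
  linarith
lemma calE_zero_zero (d : ℕ) : calE d 0 0 = 0 := by
  have h1 : ∀ i : Fin d, torusCos ((0 : Torus d) i) = 1 := fun i => by
    show torusCos 0 = 1
    rw [show (0 : AddCircle (2*Real.pi)) = ((0:ℝ) : AddCircle (2*Real.pi)) by norm_cast,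
      torusCos_coe, Real.cos_zero]
  have h2 : eps d 0 = 0 := by
    unfold eps
    rw [Finset.sum_congr rfl fun i _ => by rw [h1 i]]
    simp
  unfold calE
  rw [sub_zero, h2]
  ring

lemma Emin_zero_le (d : ℕ) : Emin d 0 ≤ 0 := by
  have hbdd : BddBelow (Set.range (calE d 0)) := by
    refine ⟨0, ?_⟩
    rintro y ⟨p, rfl⟩
    exact calE_nonneg d 0 p
  have := csInf_le hbdd ⟨(0 : Torus d), rfl⟩
  rwa [calE_zero_zero d] at this

lemma int_mono (d : ℕ) {z₁ z₂ : ℝ} (h12 : z₁ ≤ z₂) (h2 : z₂ < 0) :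
    (∫ q, (calE d 0 q - z₁)⁻¹ ∂(η d)) ≤ ∫ q, (calE d 0 q - z₂)⁻¹ ∂(η d) := by
  have h1 : z₁ < 0 := lt_of_le_of_lt h12 h2
  refine integral_mono (cont_integrable (integrand_continuous d 0 h1))
    (cont_integrable (integrand_continuous d 0 h2)) (fun q => ?_)
  have hE := calE_nonneg d 0 q
  exact inv_anti₀ (by linarith) (by linarith)

/-- for `d ∈ {1,2}`, `μ < 0` and `k ≠ 0`, if `z₀ < E_min(0)` is a zero
of `Δ_μ(0;·)` and `z_k < E_min(k)` is a zero of `Δ_μ(k;·)`, then `z₀ < z_k`. -/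
theorem bound_state_energy_strict_min_at_zero (d : ℕ) (hd : d = 1 ∨ d = 2) (μ : ℝ)
    (hμ : μ < 0) (k : Torus d) (hk : k ≠ 0) (z₀ zk : ℝ)
    (hz₀ : z₀ < Emin d 0) (hΔ₀ : Delta2 d μ 0 z₀ = 0)
    (hzk : zk < Emin d k) (hΔk : Delta2 d μ k zk = 0) :
    z₀ < zk := by
  by_contra hcon
  push_neg at hcon
  have hz0 : z₀ < 0 := lt_of_lt_of_le hz₀ (Emin_zero_le d)
  have hzk0 : zk < 0 := lt_of_le_of_lt hcon hz0
  unfold Delta2 at hΔ₀ hΔk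
  have hI : (∫ q, (calE d k q - zk)⁻¹ ∂(η d)) = ∫ q, (calE d 0 q - z₀)⁻¹ ∂(η d) := by
    apply mul_left_cancel₀ (ne_of_lt hμ)
    linarith
  have hkey : (∫ q, (calE d k q - zk)⁻¹ ∂(η d)) < ∫ q, (calE d 0 q - zk)⁻¹ ∂(η d) := by
    rcases hd with rfl | rfl
    · exact key1 k hk hzk0
    · exact key2 k hk hzk0
  have hmono := int_mono d hcon hz0
  linarith
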